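/- In the ring of formal power series ℤ[[X]], the generating function F_o(X) = Σ_{ℓ≥1} o(ℓ)·X^ℓ of the numbers o(ℓ) of ODD colored compositions satisfies (1 − 3X + 2X² − X³)·F_o(X) = X. -/

import Mathlib

/-- The number of ODD colored compositions of `ℓ`: compositions where each part
in an odd position `i` (positions counted from 1) gets a color in `{1, …, pᵢ}`,
i.e. `∑` over compositions of `∏` of the parts in odd positions. -/
def oddColoredCount (ℓ : ℕ) : ℕ :=
  ∑ c : Composition ℓ, ∏ i ∈ Finset.range c.blocks.length,
    if (i + 1) % 2 = 1 then c.blocks.getD i 1 else 1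

/-- The generating function `F_o(X) = ∑_{ℓ ≥ 1} o(ℓ) Xᶫ ∈ ℤ[[X]]` of the numbers of
ODD colored compositions; its constant coefficient is `0`. -/
def Fo : PowerSeries ℤ :=
  PowerSeries.mk fun ℓ => if ℓ = 0 then 0 else (oddColoredCount ℓ : ℤ)

/-- Alternating weight of a list of blocks. -/
def W : Bool → List ℕ → ℕ
  | _, [] => 1
  | b, p :: l => (if b then p else 1) * W (!b) l

lemma W_eq (b : Bool) (l : List ℕ) :
    W b l = ∏ i ∈ Finset.range l.length,
      if (i + 1) % 2 = (if b then 1 else 0) then l.getD i 1 else 1 := by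
  induction l generalizing b with
  | nil => simp [W]
  | cons p l ih =>
    rw [List.length_cons, Finset.prod_range_succ']
    have h1 : ∀ i ∈ Finset.range l.length,
        (if (i + 1 + 1) % 2 = (if b then 1 else 0) then (p :: l).getD (i + 1) 1 else 1)
        = (if (i + 1) % 2 = (if !b then 1 else 0) then l.getD i 1 else 1) := by
      intro i _
      rw [List.getD_cons_succ]
      congr 1
      cases b <;> simp <;> omega
    rw [Finset.prod_congr rfl h1, ← ih (!b)]
    simp only [List.getD_cons_zero, W]
    cases b <;> simp [Nat.mul_comm]

/-- Sum of alternating weights over all compositions. -/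
def S (b : Bool) (n : ℕ) : ℕ := ∑ c : Composition n, W b c.blocks

lemma S_zero (b : Bool) : S b 0 = 1 := by
  have hb : ∀ c : Composition 0, c.blocks = [] := by
    intro c
    cases h : c.blocks with
    | nil => rfl
    | cons p l =>
      have hs := c.blocks_sum
      have hp : 0 < p := c.blocks_pos (by rw [h]; exact List.mem_cons_self)
      rw [h] at hs
      simp [List.sum_cons] at hs
      omega
  have : ∀ c : Composition 0, W b c.blocks = 1 := fun c => by rw [hb c]; rfl
  rw [S, Finset.sum_congr rfl (fun c _ => this c), Finset.sum_const, smul_eq_mul, mul_one,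
    Finset.card_univ, composition_card]
  rfl

lemma blocks_ne {n : ℕ} (c : Composition (n + 1)) : c.blocks ≠ [] := by
  intro h
  have := c.blocks_sum
  rw [h] at this
  simp at this

lemma head!_pos {n : ℕ} (c : Composition (n + 1)) : 0 < c.blocks.head! :=
  c.blocks_pos (List.head!_mem_self (blocks_ne c))

lemma head!_le {n : ℕ} (c : Composition (n + 1)) : c.blocks.head! ≤ n + 1 := by
  have hs := c.blocks_sum
  rw [← List.cons_head!_tail (blocks_ne c), List.sum_cons] at hs
  omega

lemma tail_sum {n : ℕ} (c : Composition (n + 1)) :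
    c.blocks.tail.sum = n - (c.blocks.head! - 1) := by
  have hs := c.blocks_sum
  have hp := head!_pos c
  have hl := head!_le c
  rw [← List.cons_head!_tail (blocks_ne c), List.sum_cons] at hs
  omega

/-- Peel off the head of a composition. -/
def splitComp (n : ℕ) (c : Composition (n + 1)) : Σ i : ℕ, Composition (n - i) :=
  ⟨c.blocks.head! - 1,
    ⟨c.blocks.tail, fun hi => c.blocks_pos (List.mem_of_mem_tail hi), tail_sum c⟩⟩

/-- Prepend a block to a composition. -/
def consComp (n : ℕ) (p : Σ i : ℕ, Composition (n - i)) : Composition (n + 1) :=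
  if h : p.1 ≤ n then
    ⟨(p.1 + 1) :: p.2.blocks,
      fun hi => by
        rcases List.mem_cons.1 hi with h' | h'
        · omega
        · exact p.2.blocks_pos h',
      by
        have := p.2.blocks_sum
        rw [List.sum_cons]
        omega⟩
  else ⟨[n + 1], fun hi => by simp at hi; omega, by simp⟩

lemma sigma_ext {n : ℕ} (p q : Σ i : ℕ, Composition (n - i)) (h1 : p.1 = q.1)
    (h2 : p.2.blocks = q.2.blocks) : p = q := by
  rcases p with ⟨i, c⟩
  rcases q with ⟨j, d⟩
  dsimp at h1 h2
  subst h1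
  exact congrArg (Sigma.mk i) (Composition.ext h2)

lemma comp_sum_succ (n : ℕ) (f : List ℕ → ℕ) :
    ∑ c : Composition (n + 1), f c.blocks
      = ∑ i ∈ Finset.range (n + 1), ∑ c : Composition (n - i), f ((i + 1) :: c.blocks) := by
  rw [← Finset.sum_sigma (Finset.range (n + 1))
    (fun i => (Finset.univ : Finset (Composition (n - i)))) (fun p => f ((p.1 + 1) :: p.2.blocks))]
  refine Finset.sum_nbij' (splitComp n) (consComp n) ?_ ?_ ?_ ?_ ?_
  · intro c _
    rw [Finset.mem_sigma]
    refine ⟨Finset.mem_range.2 ?_, Finset.mem_univ _⟩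
    have h1 := head!_le c
    have h2 := head!_pos c
    show c.blocks.head! - 1 < n + 1
    omega
  · intro p _
    exact Finset.mem_univ _
  · intro c _
    have hp := head!_pos c
    have hle : c.blocks.head! - 1 ≤ n := by have := head!_le c; omega
    refine Composition.ext ?_
    show (consComp n (splitComp n c)).blocks = c.blocks
    rw [consComp, dif_pos (show (splitComp n c).1 ≤ n from hle)]
    show (c.blocks.head! - 1 + 1) :: c.blocks.tail = c.blocks
    have h1 : c.blocks.head! - 1 + 1 = c.blocks.head! := by omega
    rw [h1]
    exact List.cons_head!_tail (blocks_ne c)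
  · rintro ⟨i, c⟩ hp
    rw [Finset.mem_sigma, Finset.mem_range] at hp
    have hi : i ≤ n := Nat.lt_succ_iff.mp hp.1
    have hb : (consComp n ⟨i, c⟩).blocks = (i + 1) :: c.blocks := by
      rw [consComp, dif_pos hi]
    refine sigma_ext _ _ ?_ ?_
    · show (consComp n ⟨i, c⟩).blocks.head! - 1 = i
      rw [hb]; simp
    · show (consComp n ⟨i, c⟩).blocks.tail = c.blocks
      rw [hb]
      rfl
  · intro c _
    have hp := head!_pos c
    show f c.blocks = f ((c.blocks.head! - 1 + 1) :: c.blocks.tail)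
    have h1 : c.blocks.head! - 1 + 1 = c.blocks.head! := by omega
    rw [h1, List.cons_head!_tail (blocks_ne c)]

lemma S_succ (b : Bool) (n : ℕ) :
    S b (n + 1) = ∑ ij ∈ Finset.HasAntidiagonal.antidiagonal (n + 1),
      (if ij.1 = 0 then 0 else if b then ij.1 else 1) * S (!b) ij.2 := by
  rw [S, comp_sum_succ n (W b), Finset.Nat.sum_antidiagonal_eq_sum_range_succ_mk]
  conv_rhs => rw [Finset.sum_range_succ']
  have hz : (if (0, n + 1 - 0).1 = 0 then 0 else if b = true then (0, n + 1 - 0).1 else 1) *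
      S (!b) (0, n + 1 - 0).2 = 0 := by norm_num
  rw [hz, add_zero]
  refine Finset.sum_congr rfl fun i hi => ?_
  have h1 : ∑ c : Composition (n - i), W b ((i + 1) :: c.blocks)
      = (if b then i + 1 else 1) * S (!b) (n - i) := by
    rw [S, Finset.mul_sum]
    rfl
  rw [h1]
  simp [Nat.succ_sub_succ]

open PowerSeries in
/-- The generating series of first-part weights: `∑ n Xⁿ` resp. `∑_{n ≥ 1} Xⁿ`. -/
noncomputable def M (b : Bool) : PowerSeries ℤ :=
  PowerSeries.mk fun n => if n = 0 then 0 else if b then (n : ℤ) else 1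

/-- The generating series of `S b`. -/
noncomputable def G (b : Bool) : PowerSeries ℤ :=
  PowerSeries.mk fun n => (S b n : ℤ)

lemma G_eq (b : Bool) : G b = 1 + M b * G (!b) := by
  ext n
  cases n with
  | zero =>
    simp [G, M, S_zero, PowerSeries.coeff_mul, PowerSeries.coeff_zero_eq_constantCoeff]
  | succ n =>
    rw [map_add, PowerSeries.coeff_mul]
    have h1 : (PowerSeries.coeff (n + 1)) (1 : PowerSeries ℤ) = 0 := by
      simp [PowerSeries.coeff_one]
    rw [h1, zero_add]
    simp only [G, M, PowerSeries.coeff_mk]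
    rw [S_succ]
    push_cast
    refine Finset.sum_congr rfl fun ij _ => ?_
    split_ifs <;> simp

lemma M_true_eq : M true * (1 - PowerSeries.X) ^ 2 = PowerSeries.X := by
  have h : M true * (1 - PowerSeries.X) ^ 2
      = M true - (M true * PowerSeries.X + M true * PowerSeries.X)
        + M true * PowerSeries.X * PowerSeries.X := by ring
  rw [h]
  ext n
  match n with
  | 0 =>
    simp [M, PowerSeries.coeff_zero_mul_X]
  | 1 =>
    rw [map_add, map_sub, map_add]
    rw [PowerSeries.coeff_succ_mul_X, PowerSeries.coeff_succ_mul_X]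
    simp [M, PowerSeries.coeff_zero_mul_X]
  | (n + 2) =>
    rw [map_add, map_sub, map_add]
    simp only [PowerSeries.coeff_succ_mul_X]
    simp only [M, PowerSeries.coeff_mk, PowerSeries.coeff_X]
    norm_num
    split_ifs <;> omega

lemma M_false_eq : M false * (1 - PowerSeries.X) = PowerSeries.X := by
  have h : M false * (1 - PowerSeries.X) = M false - M false * PowerSeries.X := by ring
  rw [h]
  ext n
  match n with
  | 0 => simp [M, PowerSeries.coeff_zero_mul_X]
  | 1 =>
    rw [map_sub, PowerSeries.coeff_succ_mul_X]
    simp [M]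
  | (n + 2) =>
    rw [map_sub, PowerSeries.coeff_succ_mul_X]
    simp [M, PowerSeries.coeff_X]

lemma odd_eq (ℓ : ℕ) : oddColoredCount ℓ = S true ℓ := by
  rw [oddColoredCount, S]
  refine Finset.sum_congr rfl fun c _ => ?_
  rw [W_eq]
  simp

lemma Fo_eq : Fo = G true - 1 := by
  ext n
  cases n with
  | zero => simp [Fo, G, S_zero, PowerSeries.coeff_zero_eq_constantCoeff]
  | succ n =>
    rw [map_sub]
    have h1 : (PowerSeries.coeff (n + 1)) (1 : PowerSeries ℤ) = 0 := by
      simp [PowerSeries.coeff_one]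
    simp [Fo, G, h1, odd_eq]

/-- `(1 - 3X + 2X² - X³) · F_o(X) = X` in `ℤ[[X]]`. -/
theorem Fo_generating_function :
    (1 - 3 * PowerSeries.X + 2 * PowerSeries.X ^ 2 - PowerSeries.X ^ 3) * Fo =
      PowerSeries.X := by
  have hGt : G true = 1 + M true * G false := G_eq true
  have hGf : G false = 1 + M false * G true := G_eq false
  have hA := M_true_eq
  have hB := M_false_eq
  rw [hGf] at hGt
  -- hGt : G true = 1 + M true * (1 + M false * G true)
  set X := (PowerSeries.X : PowerSeries ℤ)
  have hE : G true = 1 + M true + M true * M false * G true := by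
    linear_combination hGt
  have h2 : (1 - X) ^ 3 * (M true * M false) = X ^ 2 := by
    linear_combination ((1 - X) * M false) * hA + X * hB
  have h3 : ((1 - X) ^ 3 - X ^ 2) * G true = (1 - X) ^ 3 + (1 - X) * X := by
    linear_combination (1 - X) ^ 3 * hE + G true * h2 + (1 - X) * hA
  rw [Fo_eq]
  linear_combination h3
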